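/- arXiv:1805.12477 — 2 statements merged into one kernel-verified Lean document; each statement's English description precedes it below -/
import Mathlib

section
/- Let E be a finite set, A a symmetric E×E matrix over 𝔽₂, and E' ⊆ E any subset. Then the twist (E; Φ(A) * E') of the nondegeneracy set system of A by E', where Φ(A) * E' = {U Δ E' : U ∈ Φ(A)}, is a delta-matroid: it is proper and satisfies the symmetric exchange axiom. -/
open Finset
open scoped symmDiff

variable {E : Type*} [Fintype E] [DecidableEq E]

/-- The symplectic vector space `V_E = (E → 𝔽₂) × (E → 𝔽₂)`. -/
abbrev V (E : Type*) : Type _ := (E → ZMod 2) × (E → ZMod 2)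

/-- Basis vector `e`. -/
def baseV (e : E) : V E := (Pi.single e 1, 0)

/-- Basis vector `e^∨`. -/
def dualV (e : E) : V E := (0, Pi.single e 1)

/-- The symplectic form on `V E`. -/
def omegaForm (u v : V E) : ZMod 2 := ∑ e, (u.1 e * v.2 e + u.2 e * v.1 e)

/-- A subspace is Lagrangian if the form vanishes on it and its dimension is `|E|`. -/
def IsLagrangian (L : Submodule (ZMod 2) (V E)) : Prop :=
  (∀ u ∈ L, ∀ v ∈ L, omegaForm u v = 0) ∧
    Module.finrank (ZMod 2) L = Fintype.card E

/-- The span of `{e^∨ : e ∈ Y} ∪ {e : e ∈ E \ Y}`. -/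
def coordSpan (Y : Finset E) : Submodule (ZMod 2) (V E) :=
  Submodule.span (ZMod 2)
    ((fun e => dualV e) '' (Y : Set E) ∪ (fun e => baseV e) '' ((Yᶜ : Finset E) : Set E))

/-- `Y` is feasible for `L` iff `L ∩ ⟨Y^∨ ⊔ (E \ Y)⟩ = 0`. -/
def Feasible (L : Submodule (ZMod 2) (V E)) (Y : Finset E) : Prop :=
  L ⊓ coordSpan Y = ⊥

/-- The set system `ν_E(L)`. -/
def nu (L : Submodule (ZMod 2) (V E)) : Set (Finset E) := {Y | Feasible L Y}

/-- The nondegeneracy set system of a matrix `A`. -/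
def Phi (A : Matrix E E (ZMod 2)) : Set (Finset E) :=
  {U : Finset E | IsUnit (A.submatrix (fun i : ↥U => (i : E)) (fun j : ↥U => (j : E))).det}

/-- The symmetric exchange axiom. -/
def SEAxiom (Φ : Set (Finset E)) : Prop :=
  ∀ φ₁ ∈ Φ, ∀ φ₂ ∈ Φ, ∀ e ∈ φ₁ ∆ φ₂, ∃ e' ∈ φ₁ ∆ φ₂, φ₁ ∆ ({e, e'} : Finset E) ∈ Φ

/-- Binary delta-matroid: a twist of a nondegeneracy set system. -/
def IsBinaryDM (Φ : Set (Finset E)) : Prop :=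
  ∃ (A : Matrix E E (ZMod 2)) (E' : Finset E), A.IsSymm ∧ Φ = (· ∆ E') '' Phi A

/-- The involution `σ_e` swapping `e` and `e^∨`. -/
def sigmaE (e : E) : V E →ₗ[ZMod 2] V E where
  toFun u := (fun f => if f = e then u.2 f else u.1 f, fun f => if f = e then u.1 f else u.2 f)
  map_add' u v := by ext f <;> dsimp <;> split <;> rfl
  map_smul' c u := by ext f <;> dsimp <;> split <;> rfl

/-- Composition of the `σ_e` over `e ∈ E'`. -/
def sigmaSet (E' : Finset E) : V E →ₗ[ZMod 2] V E where
  toFun u := (fun f => if f ∈ E' then u.2 f else u.1 f, fun f => if f ∈ E' then u.1 f else u.2 f)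
  map_add' u v := by ext f <;> dsimp <;> split <;> rfl
  map_smul' c u := by ext f <;> dsimp <;> split <;> rfl

/-- A Lagrangian subspace is graphic if for every `e` there is `v_e ∈ L` with
`ω(v_e,e)=1` and `ω(v_e,e')=0` for `e' ≠ e`. -/
def IsGraphic (L : Submodule (ZMod 2) (V E)) : Prop :=
  ∀ e : E, ∃ v ∈ L, omegaForm v (baseV e) = 1 ∧
    ∀ e' : E, e' ≠ e → omegaForm v (baseV e') = 0

/-- The vector `e^∨ + Σ_{e'} A_{e,e'} e'`. -/
def rowVec (A : Matrix E E (ZMod 2)) (e : E) : V E := (A e, Pi.single e 1)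

/-- The subspace spanned by the vectors `rowVec A e`, `e ∈ E`. -/
def graphOf (A : Matrix E E (ZMod 2)) : Submodule (ZMod 2) (V E) :=
  Submodule.span (ZMod 2) (Set.range (rowVec A))

/-- The first Vassiliev move: `e^∨ ↦ e^∨ + e'`, `e'^∨ ↦ e'^∨ + e`, fixing other basis vectors. -/
def vassiliev1 (e e' : E) : V E →ₗ[ZMod 2] V E where
  toFun u := (fun f => u.1 f + (if f = e' then u.2 e else 0) + (if f = e then u.2 e' else 0), u.2)
  map_add' u v := by ext f <;> dsimp <;> split_ifs <;> ring
  map_smul' c u := by ext f <;> dsimp <;> split_ifs <;> ring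


section Aux
/-- masked matrix: `A` on `S × S`, identity elsewhere. -/
def mask (S : Finset E) (A : Matrix E E (ZMod 2)) : Matrix E E (ZMod 2) :=
  Matrix.of fun i j => if i ∈ S ∧ j ∈ S then A i j else if i = j then 1 else 0

lemma mask_apply (S : Finset E) (A : Matrix E E (ZMod 2)) (i j : E) :
    mask S A i j = if i ∈ S ∧ j ∈ S then A i j else if i = j then 1 else 0 := rfl

lemma mask_det (S : Finset E) (A : Matrix E E (ZMod 2)) :
    (mask S A).det =
      (A.submatrix (fun i : ↥S => (i : E)) (fun j : ↥S => (j : E))).det := by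
  classical
  let e : {x // x ∈ S} ⊕ {x // ¬ x ∈ S} ≃ E := Equiv.sumCompl (· ∈ S)
  rw [← Matrix.det_submatrix_equiv_self e]
  have h : (mask S A).submatrix e e =
      Matrix.fromBlocks
        (A.submatrix (fun i : ↥S => (i : E)) (fun j : ↥S => (j : E))) 0 0 1 := by
    ext i j
    cases i with
    | inl i => cases j with
      | inl j => simp [mask_apply, e, i.2, j.2]
      | inr j => 
        simp [mask_apply, e, j.2, Matrix.fromBlocks]
        intro h; exact absurd (h ▸ i.2) j.2
    | inr i => cases j with
      | inl j =>
        simp [mask_apply, e, i.2, Matrix.fromBlocks]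
        intro h; exact absurd (h ▸ j.2) i.2
      | inr j =>
        simp [mask_apply, e, i.2, Matrix.fromBlocks, Matrix.one_apply,
          Subtype.ext_iff]
  rw [h, Matrix.det_fromBlocks_zero₂₁, Matrix.det_one, mul_one]

set_option linter.unusedSectionVars false

/-- `1 + u ⬝ e_gᵀ`: adds `u i` times row `g` to each row `i`. -/
def Tmat (u : E → ZMod 2) (g : E) : Matrix E E (ZMod 2) :=
  1 + Matrix.of fun i j => if j = g then u i else 0

lemma Tmat_apply (u : E → ZMod 2) (g i j : E) :
    Tmat u g i j = (if i = j then 1 else 0) + (if j = g then u i else 0) := by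
  simp [Tmat, Matrix.one_apply]

lemma Tmat_mul (u : E → ZMod 2) (g : E) (M : Matrix E E (ZMod 2)) :
    Tmat u g * M = Matrix.of fun i j => M i j + u i * M g j := by
  ext i j
  rw [Matrix.mul_apply]
  have h : ∀ k, Tmat u g i k * M k j =
      (if i = k then M k j else 0) + (if k = g then u i * M g j else 0) := by
    intro k
    rw [Tmat_apply, add_mul]
    congr 1
    · by_cases h : i = k <;> simp [h]
    · by_cases h : k = g
      · subst h; simp
      · simp [h]
  rw [Finset.sum_congr rfl (fun k _ => h k), Finset.sum_add_distrib,
    Finset.sum_ite_eq, Finset.sum_ite_eq']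
  simp

lemma mul_Tmat_t (u : E → ZMod 2) (g : E) (M : Matrix E E (ZMod 2)) :
    M * (Tmat u g).transpose = Matrix.of fun i j => M i j + M i g * u j := by
  ext i j
  rw [Matrix.mul_apply]
  have h : ∀ k, M i k * (Tmat u g).transpose k j =
      (if k = j then M i k else 0) + (if k = g then M i g * u j else 0) := by
    intro k
    rw [Matrix.transpose_apply, Tmat_apply, mul_add]
    congr 1
    · by_cases h : k = j <;> simp [h, Ne.symm, eq_comm]
    · by_cases h : k = g
      · subst h; simp [mul_comm]
      · simp [h, eq_comm]
  rw [Finset.sum_congr rfl (fun k _ => h k), Finset.sum_add_distrib,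
    Finset.sum_ite_eq', Finset.sum_ite_eq']
  simp

lemma Tmat_mul_self (u : E → ZMod 2) (g : E) (hg : u g = 0) :
    Tmat u g * Tmat u g = 1 := by
  rw [Tmat_mul]
  ext i j
  simp only [Matrix.of_apply, Tmat_apply, Matrix.one_apply]
  by_cases hj : j = g
  · simp only [hj, if_pos rfl, hg, add_zero, mul_add, mul_one]
    simp only [if_true, mul_one, mul_zero, add_zero]
    rw [add_assoc, CharTwo.add_self_eq_zero, add_zero]
  · simp only [hj, if_false]
    have : ¬ g = j := fun h => hj h.symm
    simp [this]
lemma isUnit_Tmat_det (u : E → ZMod 2) (g : E) (hg : u g = 0) :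
    IsUnit (Tmat u g).det :=
  Matrix.isUnit_det_of_right_inverse (Tmat_mul_self u g hg)

lemma isUnit_Tmat_t_det (u : E → ZMod 2) (g : E) (hg : u g = 0) :
    IsUnit (Tmat u g).transpose.det := by
  rw [Matrix.det_transpose]; exact isUnit_Tmat_det u g hg

lemma zmod2_cases (x : ZMod 2) : x = 0 ∨ x = 1 := by revert x; decide

lemma zmod2_isUnit_iff (x : ZMod 2) : IsUnit x ↔ x = 1 := by revert x; decide

lemma Phi_iff (A : Matrix E E (ZMod 2)) (U : Finset E) :
    U ∈ Phi A ↔ IsUnit (mask U A).det := by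
  rw [Phi, Set.mem_setOf_eq, mask_det]

lemma mask_congr {S : Finset E} {A B : Matrix E E (ZMod 2)}
    (h : ∀ i ∈ S, ∀ j ∈ S, A i j = B i j) : mask S A = mask S B := by
  ext i j
  simp only [mask_apply]
  by_cases hij : i ∈ S ∧ j ∈ S
  · simp [hij, h i hij.1 j hij.2]
  · simp [hij]

lemma mask_empty (A : Matrix E E (ZMod 2)) : mask (∅ : Finset E) A = 1 := by
  ext i j
  simp [mask_apply, Matrix.one_apply]

lemma empty_mem_Phi (A : Matrix E E (ZMod 2)) : (∅ : Finset E) ∈ Phi A := by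
  rw [Phi_iff, mask_empty, Matrix.det_one]
  exact isUnit_one

lemma mask_mul_mask (S : Finset E) (A B : Matrix E E (ZMod 2)) :
    mask S A * mask S B = mask S (Matrix.of fun i j => ∑ k ∈ S, A i k * B k j) := by
  ext i j
  rw [Matrix.mul_apply]
  by_cases hi : i ∈ S
  · have h : ∀ k, mask S A i k * mask S B k j =
        if k ∈ S then A i k * mask S B k j else 0 := by
      intro k
      by_cases hk : k ∈ S
      · simp [mask_apply, hi, hk]
      · have : i ≠ k := fun h => hk (h ▸ hi)
        simp [mask_apply, hk, this]
    rw [Finset.sum_congr rfl (fun k _ => h k), Finset.sum_ite_mem, Finset.univ_inter]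
    by_cases hj : j ∈ S
    · have : ∀ k ∈ S, A i k * mask S B k j = A i k * B k j := by
        intro k hk; simp [mask_apply, hk, hj]
      rw [Finset.sum_congr rfl this]
      simp [mask_apply, hi, hj]
    · have : ∀ k ∈ S, A i k * mask S B k j = 0 := by
        intro k hk
        have : k ≠ j := fun h => hj (h ▸ hk)
        simp [mask_apply, hj, this]
      rw [Finset.sum_congr rfl this]
      have : i ≠ j := fun h => hj (h ▸ hi)
      simp [mask_apply, hj, this]
  · have h : ∀ k, mask S A i k * mask S B k j =
        if i = k then mask S B k j else 0 := by
      intro k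
      by_cases hik : i = k
      · subst hik; simp [mask_apply, hi]
      · simp [mask_apply, hi, hik]
    rw [Finset.sum_congr rfl (fun k _ => h k), Finset.sum_ite_eq, if_pos (Finset.mem_univ i)]
    simp [mask_apply, hi]

/-- `{e}` is feasible when `A e e = 1`. -/
lemma single_mem_Phi {A : Matrix E E (ZMod 2)} {e : E} (h : A e e = 1) :
    ({e} : Finset E) ∈ Phi A := by
  rw [Phi_iff]
  have : mask ({e} : Finset E) A = 1 := by
    ext i j
    simp only [mask_apply, Finset.mem_singleton, Matrix.one_apply]
    by_cases hi : i = e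
    · by_cases hj : j = e
      · subst hi; subst hj; simp [h]
      · simp [hi, hj]
    · simp [hi]
  rw [this, Matrix.det_one]; exact isUnit_one

/-- `{e, e'}` is feasible when `A e e' = A e' e = 1`, `A e e = 0`. -/
lemma pair_mem_Phi {A : Matrix E E (ZMod 2)} {e e' : E} (hne : e ≠ e')
    (hee : A e e = 0) (h1 : A e e' = 1) (h1' : A e' e = 1) :
    ({e, e'} : Finset E) ∈ Phi A := by
  rw [Phi_iff]
  set S : Finset E := {e, e'} with hS
  set C : Matrix E E (ZMod 2) :=
    Matrix.of (fun i j => if i = e ∧ j = e then A e' e' else if i = j then 0 else 1) with hC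
  apply Matrix.isUnit_det_of_right_inverse (B := mask S C)
  rw [mask_mul_mask]
  have he : e ∈ S := by simp [hS]
  have he' : e' ∈ S := by simp [hS]
  ext i j
  simp only [mask_apply, Matrix.of_apply, Matrix.one_apply]
  by_cases hij : i ∈ S ∧ j ∈ S
  · rw [if_pos hij]
    rw [hS, Finset.sum_pair hne]
    rcases hij with ⟨hi, hj⟩
    have hi' : i = e ∨ i = e' := by simpa [hS] using hi
    have hj' : j = e ∨ j = e' := by simpa [hS] using hj
    rcases hi' with rfl | rfl <;> rcases hj' with rfl | rfl <;>
      simp [hC, hne, hne.symm, hee, h1, h1', CharTwo.add_self_eq_zero]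
  · simp [hij]

lemma isUnit_conj {x y z : ZMod 2} (hx : IsUnit x) (hz : IsUnit z) :
    IsUnit (x * y * z) ↔ IsUnit y := by
  rw [IsUnit.mul_iff, IsUnit.mul_iff]
  tauto

lemma symmDiff_singleton_not_mem {S : Finset E} {g : E} (h : g ∉ S) :
    S ∆ ({g} : Finset E) = insert g S := by
  ext x
  simp only [Finset.mem_symmDiff, Finset.mem_singleton, Finset.mem_insert]
  constructor
  · rintro (⟨hx, _⟩ | ⟨rfl, _⟩) <;> tauto
  · rintro (rfl | hx)
    · exact Or.inr ⟨rfl, h⟩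
    · exact Or.inl ⟨hx, fun hxg => h (hxg ▸ hx)⟩

lemma symmDiff_singleton_mem {S : Finset E} {g : E} (h : g ∈ S) :
    S ∆ ({g} : Finset E) = S.erase g := by
  ext x
  simp only [Finset.mem_symmDiff, Finset.mem_singleton, Finset.mem_erase]
  constructor
  · rintro (⟨hx, hxg⟩ | ⟨rfl, hx⟩)
    · exact ⟨hxg, hx⟩
    · exact absurd h hx
  · rintro ⟨hxg, hx⟩; exact Or.inl ⟨hx, hxg⟩

/-- The principal pivot transform at a diagonal element `g` (over `𝔽₂`). -/
def pivot1 (A : Matrix E E (ZMod 2)) (g : E) : Matrix E E (ZMod 2) :=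
  Matrix.of fun i j => if i = g ∨ j = g then A i j else A i j + A i g * A g j

lemma pivot1_apply_left {A : Matrix E E (ZMod 2)} {g i j : E} (h : i = g ∨ j = g) :
    pivot1 A g i j = A i j := by
  simp only [pivot1, Matrix.of_apply]; rw [if_pos h]

lemma pivot1_apply_off {A : Matrix E E (ZMod 2)} {g i j : E} (h : ¬(i = g ∨ j = g)) :
    pivot1 A g i j = A i j + A i g * A g j := by
  simp only [pivot1, Matrix.of_apply]; rw [if_neg h]

lemma pivot1_symm {A : Matrix E E (ZMod 2)} (hA : A.IsSymm) (g : E) :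
    (pivot1 A g).IsSymm := by
  apply Matrix.IsSymm.ext
  intro i j
  by_cases h : i = g ∨ j = g
  · rw [pivot1_apply_left (Or.symm h), pivot1_apply_left h, hA.apply]
  · rw [pivot1_apply_off (fun h' => h (Or.symm h')), pivot1_apply_off h,
      hA.apply i j, hA.apply i g, hA.apply g j]
    ring

lemma pivot1_gg (A : Matrix E E (ZMod 2)) (g : E) : pivot1 A g g g = A g g :=
  pivot1_apply_left (Or.inl rfl)

lemma pivot1_pivot1 (A : Matrix E E (ZMod 2)) (g : E) {i j : E}
    (hi : i ≠ g) (hj : j ≠ g) : pivot1 (pivot1 A g) g i j = A i j := by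
  have hij : ¬(i = g ∨ j = g) := by tauto
  rw [pivot1_apply_off hij, pivot1_apply_off hij,
    pivot1_apply_left (Or.inr rfl : i = g ∨ g = g),
    pivot1_apply_left (Or.inl rfl : g = g ∨ j = g),
    add_assoc, CharTwo.add_self_eq_zero, add_zero]

/-- Key conjugation identity for the single pivot. -/
lemma P1 {A : Matrix E E (ZMod 2)} (hA : A.IsSymm) {g : E} (hgg : A g g = 1)
    {S : Finset E} (hg : g ∉ S) :
    (IsUnit (mask (insert g S) A).det ↔ IsUnit (mask S (pivot1 A g)).det) := by
  set u : E → ZMod 2 := fun i => if i ∈ S then A i g else 0 with hu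
  have hug : u g = 0 := by simp [hu, hg]
  set M := mask (insert g S) A with hM
  have hMgg : M g g = A g g := by simp [hM, mask_apply]
  have key : Tmat u g * M * (Tmat u g).transpose = mask S (pivot1 A g) := by
    rw [Tmat_mul, mul_Tmat_t]
    ext i j
    simp only [Matrix.of_apply]
    by_cases hi : i ∈ S <;> by_cases hj : j ∈ S
    · -- i, j ∈ S
      have hig : i ≠ g := fun h => hg (h ▸ hi)
      have hjg : j ≠ g := fun h => hg (h ▸ hj)
      have e1 : M i j = A i j := by simp [hM, mask_apply, hi, hj]
      have e2 : M g j = A g j := by simp [hM, mask_apply, hj]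
      have e3 : M i g = A i g := by simp [hM, mask_apply, hi]
      have hui : u i = A i g := by simp [hu, hi]
      have huj : u j = A j g := by simp [hu, hj]
      rw [e1, e2, e3, hMgg, hui, huj, hgg, mul_one, CharTwo.add_self_eq_zero, zero_mul,
        add_zero, mask_apply, if_pos ⟨hi, hj⟩, pivot1_apply_off (by tauto)]
    · -- i ∈ S, j ∉ S
      have hij : i ≠ j := fun h => hj (h ▸ hi)
      have huj : u j = 0 := by simp [hu, hj]
      have hui : u i = A i g := by simp [hu, hi]
      rw [huj, mul_zero, add_zero, mask_apply, if_neg (by tauto : ¬(i ∈ S ∧ j ∈ S)),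
        if_neg hij, hui]
      by_cases hjg : j = g
      · rw [hjg, hMgg, hgg, mul_one]
        have e3 : M i g = A i g := by simp [hM, mask_apply, hi]
        rw [e3, CharTwo.add_self_eq_zero]
      · have e1 : M i j = 0 := by simp [hM, mask_apply, hj, hjg, hij]
        have e2 : M g j = 0 := by
          have hgj : g ≠ j := fun h => hjg h.symm
          simp [hM, mask_apply, hj, hjg, hgj]
        rw [e1, e2, mul_zero, add_zero]
    · -- i ∉ S, j ∈ S
      have hjg : j ≠ g := fun h => hg (h ▸ hj)
      have hij : i ≠ j := fun h => hi (h ▸ hj)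
      have hui : u i = 0 := by simp [hu, hi]
      have huj : u j = A j g := by simp [hu, hj]
      rw [hui, zero_mul, add_zero, zero_mul, add_zero, mask_apply,
        if_neg (by tauto : ¬(i ∈ S ∧ j ∈ S)), if_neg hij]
      by_cases hig : i = g
      · rw [hig]
        have e1 : M g j = A g j := by simp [hM, mask_apply, hj]
        rw [e1, hMgg, hgg, one_mul, huj, show A j g = A g j from hA.apply g j,
          CharTwo.add_self_eq_zero]
      · have e1 : M i j = 0 := by simp [hM, mask_apply, hi, hig, hij]
        have e2 : M i g = 0 := by simp [hM, mask_apply, hi, hig]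
        rw [e1, e2, zero_mul, add_zero]
    · -- i ∉ S, j ∉ S
      have hui : u i = 0 := by simp [hu, hi]
      have huj : u j = 0 := by simp [hu, hj]
      rw [hui, huj, zero_mul, add_zero, mul_zero, add_zero, mask_apply,
        if_neg (by tauto : ¬(i ∈ S ∧ j ∈ S))]
      by_cases hij : i = j
      · rw [if_pos hij, hij]
        by_cases hjg : j = g
        · rw [hjg, hMgg, hgg]
        · simp [hM, mask_apply, hj, hjg]
      · rw [if_neg hij]
        by_cases hig : i = g
        · have hgj : ¬ (g = j) := fun h => hij (hig.trans h)
          have hjg2 : ¬ (j = g) := fun h => hgj h.symm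
          rw [hig]
          simp [hM, mask_apply, hj, hgj, hjg2]
        · by_cases hjg : j = g
          · rw [hjg]; simp [hM, mask_apply, hi, hig, fun h : i = g => hig h]
          · simp [hM, mask_apply, hi, hig, hij, hj, hjg]
  have hdet := congrArg Matrix.det key
  rw [Matrix.det_mul, Matrix.det_mul] at hdet
  have hT := isUnit_Tmat_det u g hug
  have hTt := isUnit_Tmat_t_det u g hug
  rw [← hdet, isUnit_conj hT hTt]

lemma P1' {A : Matrix E E (ZMod 2)} (hA : A.IsSymm) {g : E} (hgg : A g g = 1)
    (S : Finset E) :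
    IsUnit (mask S (pivot1 A g)).det ↔ IsUnit (mask (S ∆ ({g} : Finset E)) A).det := by
  by_cases hg : g ∈ S
  · rw [symmDiff_singleton_mem hg]
    have hgT : g ∉ S.erase g := Finset.notMem_erase g S
    have h2 := P1 (pivot1_symm hA g) (by rw [pivot1_gg]; exact hgg) hgT
    rw [Finset.insert_erase hg] at h2
    rw [h2]
    have : mask (S.erase g) (pivot1 (pivot1 A g) g) = mask (S.erase g) A :=
      mask_congr (fun i hi j hj =>
        pivot1_pivot1 A g (Finset.ne_of_mem_erase hi) (Finset.ne_of_mem_erase hj))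
    rw [this]
  · rw [symmDiff_singleton_not_mem hg]
    exact (P1 hA hgg hg).symm

/-- Column-permutation matrix for the transposition `(g h)`. -/
def Pmat (g h : E) : Matrix E E (ZMod 2) :=
  Matrix.of fun i j => if i = Equiv.swap g h j then 1 else 0

lemma mul_Pmat (g h : E) (M : Matrix E E (ZMod 2)) :
    M * Pmat g h = Matrix.of fun i j => M i (Equiv.swap g h j) := by
  ext i j
  rw [Matrix.mul_apply]
  have h' : ∀ k, M i k * Pmat g h k j =
      if k = Equiv.swap g h j then M i (Equiv.swap g h j) else 0 := by
    intro k
    simp only [Pmat, Matrix.of_apply]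
    by_cases hk : k = Equiv.swap g h j
    · rw [if_pos hk, if_pos hk, hk, mul_one]
    · rw [if_neg hk, if_neg hk, mul_zero]
  rw [Finset.sum_congr rfl (fun k _ => h' k), Finset.sum_ite_eq', if_pos (Finset.mem_univ _)]
  rfl

lemma Pmat_mul_self (g h : E) : Pmat g h * Pmat g h = 1 := by
  rw [mul_Pmat]
  ext i j
  simp only [Matrix.of_apply, Pmat, Equiv.swap_apply_self, Matrix.one_apply]

lemma isUnit_Pmat_det (g h : E) : IsUnit (Pmat g h).det :=
  Matrix.isUnit_det_of_right_inverse (Pmat_mul_self g h)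

/-- The principal pivot transform on a pair `{g, h}` with zero diagonal (over `𝔽₂`). -/
def pivot2 (A : Matrix E E (ZMod 2)) (g h : E) : Matrix E E (ZMod 2) :=
  Matrix.of fun i j =>
    if i = g ∨ i = h ∨ j = g ∨ j = h then A (Equiv.swap g h i) (Equiv.swap g h j)
    else A i j + A i g * A h j + A i h * A g j

lemma pivot2_apply_touch {A : Matrix E E (ZMod 2)} {g h i j : E}
    (hc : i = g ∨ i = h ∨ j = g ∨ j = h) :
    pivot2 A g h i j = A (Equiv.swap g h i) (Equiv.swap g h j) := by
  simp only [pivot2, Matrix.of_apply]; rw [if_pos hc]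

lemma pivot2_apply_off {A : Matrix E E (ZMod 2)} {g h i j : E}
    (hc : ¬(i = g ∨ i = h ∨ j = g ∨ j = h)) :
    pivot2 A g h i j = A i j + A i g * A h j + A i h * A g j := by
  simp only [pivot2, Matrix.of_apply]; rw [if_neg hc]

lemma pivot2_comm (A : Matrix E E (ZMod 2)) (g h : E) :
    pivot2 A g h = pivot2 A h g := by
  ext i j
  by_cases hc : i = g ∨ i = h ∨ j = g ∨ j = h
  · rw [pivot2_apply_touch hc, pivot2_apply_touch (by tauto), Equiv.swap_comm]
  · rw [pivot2_apply_off hc, pivot2_apply_off (by tauto)]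
    ring

lemma pivot2_symm {A : Matrix E E (ZMod 2)} (hA : A.IsSymm) (g h : E) :
    (pivot2 A g h).IsSymm := by
  apply Matrix.IsSymm.ext
  intro i j
  by_cases hc : i = g ∨ i = h ∨ j = g ∨ j = h
  · rw [pivot2_apply_touch hc, pivot2_apply_touch (by tauto), hA.apply]
  · rw [pivot2_apply_off hc, pivot2_apply_off (by tauto), hA.apply i j,
      hA.apply i g, hA.apply g j, hA.apply i h, hA.apply h j]
    ring

lemma pivot2_pivot2 {A : Matrix E E (ZMod 2)} {g h : E} {i j : E}
    (hig : i ≠ g) (hih : i ≠ h) (hjg : j ≠ g) (hjh : j ≠ h) :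
    pivot2 (pivot2 A g h) g h i j = A i j := by
  have hc : ¬(i = g ∨ i = h ∨ j = g ∨ j = h) := by tauto
  have hτi : Equiv.swap g h i = i := Equiv.swap_apply_of_ne_of_ne hig hih
  rw [pivot2_apply_off hc, pivot2_apply_off hc,
    pivot2_apply_touch (Or.inr (Or.inr (Or.inl rfl)) : i = g ∨ i = h ∨ g = g ∨ g = h),
    pivot2_apply_touch (Or.inr (Or.inr (Or.inr rfl)) : i = g ∨ i = h ∨ h = g ∨ h = h),
    pivot2_apply_touch (Or.inr (Or.inl rfl) : h = g ∨ h = h ∨ j = g ∨ j = h),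
    pivot2_apply_touch (Or.inl rfl : g = g ∨ g = h ∨ j = g ∨ j = h),
    hτi, Equiv.swap_apply_left, Equiv.swap_apply_right]
  have hτj : Equiv.swap g h j = j := Equiv.swap_apply_of_ne_of_ne hjg hjh
  rw [hτj]
  ring_nf
  rw [show A i j + A i g * A h j * 2 + A i h * A g j * 2
      = A i j + (A i g * A h j + A i h * A g j) * 2 by ring]
  simp [CharTwo.two_eq_zero]

lemma two_zmod2 : (2 : ZMod 2) = 0 := rfl

/-- Key conjugation identity for the pair pivot. -/
lemma P2 {A : Matrix E E (ZMod 2)} (hA : A.IsSymm) {g h : E} (hne : g ≠ h)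
    (hgh1 : A g h = 1) (hgg : A g g = 0) (hhh : A h h = 0)
    {S : Finset E} (hgS : g ∉ S) (hhS : h ∉ S) :
    IsUnit (mask (insert g (insert h S)) A).det ↔ IsUnit (mask S (pivot2 A g h)).det := by
  have hhg1 : A h g = 1 := by rw [hA.apply]; exact hgh1
  set u : E → ZMod 2 := fun i => if i ∈ S then A i g else 0 with hu
  set w : E → ZMod 2 := fun i => if i ∈ S then A i h else 0 with hw
  have hug : u g = 0 := by simp [hu, hgS]
  have huh : u h = 0 := by simp [hu, hhS]
  have hwg : w g = 0 := by simp [hw, hgS]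
  have hwh : w h = 0 := by simp [hw, hhS]
  set M := mask (insert g (insert h S)) A with hM
  have hMval : ∀ x y, M x y =
      if (x = g ∨ x = h ∨ x ∈ S) ∧ (y = g ∨ y = h ∨ y ∈ S) then A x y
      else if x = y then 1 else 0 := by
    intro x y
    simp [hM, mask_apply, Finset.mem_insert]
  have hMgg : M g g = 0 := by rw [hMval]; simp [hgg]
  have hMhh : M h h = 0 := by rw [hMval]; simp [hhh]
  have hMgh : M g h = 1 := by rw [hMval]; simp [hgh1]
  have hMhg : M h g = 1 := by rw [hMval]; simp [hhg1]
  have key : (Tmat u h * ((Tmat w g * M) * (Tmat w g).transpose) * (Tmat u h).transpose)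
      * Pmat g h = mask S (pivot2 A g h) := by
    rw [Tmat_mul w g M, mul_Tmat_t, Tmat_mul, mul_Tmat_t, mul_Pmat]
    ext i j
    simp only [Matrix.of_apply]
    rw [hMgg, hMhh, hMgh, hMhg, hwh]
    simp only [mul_zero, zero_mul, add_zero, mul_one, one_mul, zero_add]
    by_cases hjg : j = g
    · rw [hjg, Equiv.swap_apply_left, hMgh, hMhh, hwh, huh, mask_apply,
        if_neg (fun hc : _ ∧ g ∈ S => hgS hc.2)]
      simp only [mul_zero, mul_one, add_zero]
      by_cases hig : i = g
      · rw [hig, hMgh, hwg, if_pos rfl]; ring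
      · rw [if_neg hig]
        by_cases hih : i = h
        · rw [hih, hMhh, hwh]; ring
        · by_cases hiS : i ∈ S
          · have e1 : M i h = A i h := by rw [hMval]; simp [hiS]
            have e4 : w i = A i h := by simp [hw, hiS]
            rw [e1, e4]
            linear_combination (A i h) * two_zmod2
          · have e1 : M i h = 0 := by rw [hMval]; simp [hiS, hig, hih]
            have e4 : w i = 0 := by simp [hw, hiS]
            rw [e1, e4]; ring
    · by_cases hjh : j = h
      · rw [hjh, Equiv.swap_apply_right, hMgg, hMhg, hwg, hug, mask_apply,
          if_neg (fun hc : _ ∧ h ∈ S => hhS hc.2)]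
        simp only [mul_zero, mul_one, add_zero, zero_add]
        by_cases hig : i = g
        · rw [hig, hMgg, hug, if_neg hne]; ring
        · by_cases hih : i = h
          · rw [hih, hMhg, huh, if_pos rfl]; ring
          · rw [if_neg hih]
            by_cases hiS : i ∈ S
            · have e2 : M i g = A i g := by rw [hMval]; simp [hiS]
              have e3 : u i = A i g := by simp [hu, hiS]
              rw [e2, e3]
              linear_combination (A i g) * two_zmod2
            · have e2 : M i g = 0 := by rw [hMval]; simp [hiS, hig, hih]
              have e3 : u i = 0 := by simp [hu, hiS]
              rw [e2, e3]; ring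
      · have hτj : Equiv.swap g h j = j := Equiv.swap_apply_of_ne_of_ne hjg hjh
        rw [hτj, mask_apply]
        by_cases hjS : j ∈ S
        · have f1 : M g j = A g j := by rw [hMval]; simp [hjS]
          have f2 : M h j = A h j := by rw [hMval]; simp [hjS]
          have f3 : u j = A g j := by
            simp only [hu, hjS, if_true]; rw [hA.apply]
          have f4 : w j = A h j := by
            simp only [hw, hjS, if_true]; rw [hA.apply]
          rw [f1, f2, f3, f4]
          by_cases hig : i = g
          · rw [hig, if_neg (fun hc : g ∈ S ∧ _ => hgS hc.1), if_neg (fun hc : g = j => hjg hc.symm),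
              hMgg, hMgh, hug, hwg]
            linear_combination (A g j) * two_zmod2 + f1
          · by_cases hih : i = h
            · rw [hih, if_neg (fun hc : h ∈ S ∧ _ => hhS hc.1), if_neg (fun hc : h = j => hjh hc.symm),
                hMhg, hMhh, huh, hwh]
              linear_combination (A h j) * two_zmod2 + f2
            · by_cases hiS : i ∈ S
              · have e1 : M i j = A i j := by rw [hMval]; simp [hiS, hjS]
                have e2 : M i g = A i g := by rw [hMval]; simp [hiS]
                have e5 : M i h = A i h := by rw [hMval]; simp [hiS]
                have e3 : u i = A i g := by simp [hu, hiS]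
                have e4 : w i = A i h := by simp [hw, hiS]
                rw [e1, e2, e5, e3, e4, if_pos ⟨hiS, hjS⟩,
                  pivot2_apply_off (by tauto)]
                linear_combination (A i g * A h j + A i h * A g j) * two_zmod2
              · have hij : i ≠ j := fun hc => hiS (hc ▸ hjS)
                have e1 : M i j = 0 := by rw [hMval]; simp [hiS, hig, hih, hij]
                have e2 : M i g = 0 := by rw [hMval]; simp [hiS, hig, hih]
                have e5 : M i h = 0 := by rw [hMval]; simp [hiS, hig, hih]
                have e3 : u i = 0 := by simp [hu, hiS]
                have e4 : w i = 0 := by simp [hw, hiS]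
                rw [e1, e2, e5, e3, e4, if_neg (fun hc : i ∈ S ∧ _ => hiS hc.1), if_neg hij]
                ring
        · have f3 : u j = 0 := by simp [hu, hjS]
          have f4 : w j = 0 := by simp [hw, hjS]
          have hjI : j = g ∨ j = h ∨ j ∈ S ↔ False := by tauto
          rw [f3, f4, if_neg (fun hc : _ ∧ j ∈ S => hjS hc.2)]
          simp only [mul_zero, add_zero]
          have hgj : ¬ g = j := fun hc => hjg hc.symm
          have hhj : ¬ h = j := fun hc => hjh hc.symm
          have f1 : M g j = 0 := by rw [hMval]; simp [hjI, hgj]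
          have f2 : M h j = 0 := by rw [hMval]; simp [hjI, hhj]
          by_cases hig : i = g
          · rw [hig, f1, hwg, hug]
            rw [if_neg hgj]
            ring
          · by_cases hih : i = h
            · rw [hih, f2, hwh, if_neg hhj]
              ring
            · by_cases hiS : i ∈ S
              · have hij : i ≠ j := fun hc => hjS (hc ▸ hiS)
                have e1 : M i j = 0 := by rw [hMval]; simp [hjI, hij]
                rw [e1, f1, f2, if_neg hij]
                ring
              · have e3 : u i = 0 := by simp [hu, hiS]
                have e4 : w i = 0 := by simp [hw, hiS]
                have hiI : i = g ∨ i = h ∨ i ∈ S ↔ False := by tauto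
                have e1 : M i j = if i = j then 1 else 0 := by
                  rw [hMval]; simp [hiI]
                rw [e1, e3, e4]
                ring
  have hT1 := isUnit_Tmat_det u h huh
  have hT2 := isUnit_Tmat_det w g hwg
  have hT1t := isUnit_Tmat_t_det u h huh
  have hT2t := isUnit_Tmat_t_det w g hwg
  have hP := isUnit_Pmat_det g h
  rw [← key]
  simp only [Matrix.det_mul, IsUnit.mul_iff, hT1, hT2, hT1t, hT2t, hP,
    and_true, true_and]

/-- Mixed-case identity for the pair pivot. -/
lemma P2mixed {A : Matrix E E (ZMod 2)} (hA : A.IsSymm) {g h : E} (hne : g ≠ h)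
    (hgh1 : A g h = 1) (hgg : A g g = 0) (hhh : A h h = 0)
    {S : Finset E} (hgS : g ∉ S) (hhS : h ∉ S) :
    IsUnit (mask (insert g S) (pivot2 A g h)).det ↔ IsUnit (mask (insert h S) A).det := by
  set B := pivot2 A g h with hB
  set u : E → ZMod 2 := fun i => if i ∈ S then A i g else 0 with hu
  have hug : u g = 0 := by simp [hu, hgS]
  have huh : u h = 0 := by simp [hu, hhS]
  set M := mask (insert g S) B with hM
  have hMval : ∀ x y, M x y =
      if (x = g ∨ x ∈ S) ∧ (y = g ∨ y ∈ S) then B x y else if x = y then 1 else 0 := by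
    intro x y
    simp [hM, mask_apply, Finset.mem_insert]
  have hτ : ∀ x, x ∈ S → Equiv.swap g h x = x := fun x hx =>
    Equiv.swap_apply_of_ne_of_ne (fun hc => hgS (hc ▸ hx)) (fun hc => hhS (hc ▸ hx))
  have hMgg : M g g = 0 := by
    rw [hMval, if_pos ⟨Or.inl rfl, Or.inl rfl⟩, hB,
      pivot2_apply_touch (Or.inl rfl), Equiv.swap_apply_left]
    exact hhh
  have key : Tmat u g * M * (Tmat u g).transpose =
      (mask (insert h S) A).submatrix (Equiv.swap g h) (Equiv.swap g h) := by
    rw [Tmat_mul, mul_Tmat_t]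
    ext i j
    simp only [Matrix.of_apply, Matrix.submatrix_apply]
    rw [hMgg, mul_zero, add_zero]
    by_cases hig : i = g
    · rw [hig, hug, Equiv.swap_apply_left, zero_mul, add_zero, hMgg, zero_mul, add_zero]
      by_cases hjg : j = g
      · rw [hjg, hMgg, Equiv.swap_apply_left, mask_apply,
          if_pos ⟨Finset.mem_insert_self h S, Finset.mem_insert_self h S⟩, hhh]
      · by_cases hjS : j ∈ S
        · have e1 : M g j = B g j := by rw [hMval]; simp [hjS]
          rw [e1, hB, pivot2_apply_touch (Or.inl rfl), Equiv.swap_apply_left, hτ j hjS,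
            mask_apply, if_pos ⟨Finset.mem_insert_self h S, Finset.mem_insert_of_mem hjS⟩]
        · have hgj : ¬ g = j := fun hc => hjg hc.symm
          have e1 : M g j = 0 := by
            rw [hMval]; simp [hjS, hjg, hgj]
          rw [e1]
          by_cases hjh : j = h
          · rw [hjh, Equiv.swap_apply_right, mask_apply,
              if_neg (fun hc : _ ∧ g ∈ insert h S =>
                (by simp [Finset.mem_insert, hne, hgS] : g ∉ insert h S) hc.2)]
            rw [if_neg (fun hc : h = g => hne hc.symm)]
          · have hτj : Equiv.swap g h j = j := Equiv.swap_apply_of_ne_of_ne hjg hjh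
            rw [hτj, mask_apply,
              if_neg (fun hc : _ ∧ j ∈ insert h S =>
                (by simp [Finset.mem_insert, hjh, hjS] : j ∉ insert h S) hc.2)]
            rw [if_neg (fun hc : h = j => hjh hc.symm)]
    · by_cases hiS : i ∈ S
      · have hui : u i = A i g := by simp [hu, hiS]
        have hih : i ≠ h := fun hc => hhS (hc ▸ hiS)
        have hτi := hτ i hiS
        have e2 : M i g = B i g := by rw [hMval]; simp [hiS]
        have hBig : B i g = A i h := by
          rw [hB, pivot2_apply_touch (Or.inr (Or.inr (Or.inl rfl))), hτi, Equiv.swap_apply_left]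
        by_cases hjg : j = g
        · rw [hjg, hug, mul_zero, add_zero, hMgg, mul_zero, add_zero, e2, hBig,
            Equiv.swap_apply_left, hτi, mask_apply,
            if_pos ⟨Finset.mem_insert_of_mem hiS, Finset.mem_insert_self h S⟩]
        · by_cases hjS : j ∈ S
          · have huj : u j = A g j := by
              simp only [hu, hjS, if_true]; rw [hA.apply]
            have e1 : M i j = B i j := by rw [hMval]; simp [hiS, hjS]
            have f1 : M g j = B g j := by rw [hMval]; simp [hjS]
            have hjg' : j ≠ g := hjg
            have hjh : j ≠ h := fun hc => hhS (hc ▸ hjS)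
            have hBij : B i j = A i j + A i g * A h j + A i h * A g j := by
              rw [hB]; exact pivot2_apply_off (by tauto)
            have hBgj : B g j = A h j := by
              rw [hB, pivot2_apply_touch (Or.inl rfl), Equiv.swap_apply_left, hτ j hjS]
            rw [e1, f1, e2, hBij, hBgj, hBig, hui, huj, hτi, hτ j hjS, mask_apply,
              if_pos ⟨Finset.mem_insert_of_mem hiS, Finset.mem_insert_of_mem hjS⟩]
            linear_combination (A i g * A h j + A i h * A g j) * two_zmod2
          · have huj : u j = 0 := by simp [hu, hjS]
            rw [huj, mul_zero, add_zero]
            have hij : i ≠ j := fun hc => hjS (hc ▸ hiS)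
            have hgj : ¬ g = j := fun hc => hjg hc.symm
            have e1 : M i j = 0 := by rw [hMval]; simp [hiS, hjS, hjg, hij]
            have f1 : M g j = 0 := by
              rw [hMval]; simp [hjS, hjg, hgj]
            rw [e1, f1, mul_zero, add_zero, hτi]
            by_cases hjh : j = h
            · rw [hjh, Equiv.swap_apply_right, mask_apply,
                if_neg (fun hc : _ ∧ g ∈ insert h S =>
                  (by simp [Finset.mem_insert, hne, hgS] : g ∉ insert h S) hc.2)]
              rw [if_neg (fun hc : i = g => hig hc)]
            · have hτj : Equiv.swap g h j = j := Equiv.swap_apply_of_ne_of_ne hjg hjh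
              rw [hτj, mask_apply,
                if_neg (fun hc : _ ∧ j ∈ insert h S =>
                  (by simp [Finset.mem_insert, hjh, hjS] : j ∉ insert h S) hc.2)]
              rw [if_neg hij]
      · -- i ∉ S, i ≠ g
        have hui : u i = 0 := by simp [hu, hiS]
        rw [hui, zero_mul, add_zero]
        have e2 : M i g = 0 := by rw [hMval]; simp [hiS, hig]
        rw [e2, zero_mul, add_zero]
        have e1 : M i j = if i = j then 1 else 0 := by
          rw [hMval]; simp [hiS, hig]
        rw [e1]
        have hgins : g ∉ insert h S := by simp [Finset.mem_insert, hne, hgS]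
        have hmem : ∀ x y : E, x ∉ insert h S →
            mask (insert h S) A x y = if x = y then 1 else 0 := fun x y hx => by
          rw [mask_apply, if_neg (fun hc => hx hc.1)]
        by_cases hih : i = h
        · rw [hih, Equiv.swap_apply_right, hmem _ _ hgins]
          by_cases hjg : j = g
          · have hhg : ¬ h = g := fun hc => hne hc.symm
            rw [hjg, Equiv.swap_apply_left]
            simp [hne, hhg]
          · by_cases hjh : j = h
            · rw [hjh, Equiv.swap_apply_right]
              simp only [if_pos rfl]
            · have h1 : ¬ h = j := fun hc => hjh hc.symm
              have h2 : ¬ g = j := fun hc => hjg hc.symm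
              rw [Equiv.swap_apply_of_ne_of_ne hjg hjh]
              simp [h1, h2]
        · have hτi := Equiv.swap_apply_of_ne_of_ne hig hih
          have hiins : i ∉ insert h S := by simp [Finset.mem_insert, hih, hiS]
          rw [hτi, hmem _ _ hiins]
          by_cases hjg : j = g
          · rw [hjg, Equiv.swap_apply_left]; simp [hig, hih]
          · by_cases hjh : j = h
            · rw [hjh, Equiv.swap_apply_right]; simp [hih, hig]
            · rw [Equiv.swap_apply_of_ne_of_ne hjg hjh]
  have hT := isUnit_Tmat_det u g hug
  have hTt := isUnit_Tmat_t_det u g hug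
  have hdet := congrArg Matrix.det key
  rw [Matrix.det_mul, Matrix.det_mul,
    Matrix.det_submatrix_equiv_self (Equiv.swap g h)] at hdet
  rw [← hdet, isUnit_conj hT hTt]

lemma symmDiff_pair_nn {S : Finset E} {g h : E} (hne : g ≠ h) (hg : g ∉ S) (hh : h ∉ S) :
    S ∆ ({g, h} : Finset E) = insert g (insert h S) := by
  ext x
  by_cases hxg : x = g <;> by_cases hxh : x = h <;>
    simp_all [Finset.mem_symmDiff, Finset.mem_insert, hne] <;> tauto

lemma symmDiff_pair_yy {S : Finset E} {g h : E} (hne : g ≠ h) (hg : g ∈ S) (hh : h ∈ S) :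
    S ∆ ({g, h} : Finset E) = (S.erase g).erase h := by
  ext x
  by_cases hxg : x = g <;> by_cases hxh : x = h <;>
    simp_all [Finset.mem_symmDiff, Finset.mem_insert, Finset.mem_erase, hne] <;> tauto

lemma symmDiff_pair_yn {S : Finset E} {g h : E} (hne : g ≠ h) (hg : g ∈ S) (hh : h ∉ S) :
    S ∆ ({g, h} : Finset E) = insert h (S.erase g) := by
  ext x
  by_cases hxg : x = g <;> by_cases hxh : x = h <;>
    simp_all [Finset.mem_symmDiff, Finset.mem_insert, Finset.mem_erase, hne] <;> tauto

lemma symmDiff_pair_ny {S : Finset E} {g h : E} (hne : g ≠ h) (hg : g ∉ S) (hh : h ∈ S) :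
    S ∆ ({g, h} : Finset E) = insert g (S.erase h) := by
  ext x
  by_cases hxg : x = g <;> by_cases hxh : x = h <;>
    simp_all [Finset.mem_symmDiff, Finset.mem_insert, Finset.mem_erase, hne] <;> tauto

/-- Full pivot identity for the pair pivot. -/
lemma P2all {A : Matrix E E (ZMod 2)} (hA : A.IsSymm) {g h : E} (hne : g ≠ h)
    (hgh1 : A g h = 1) (hgg : A g g = 0) (hhh : A h h = 0) (S : Finset E) :
    IsUnit (mask S (pivot2 A g h)).det ↔ IsUnit (mask (S ∆ ({g, h} : Finset E)) A).det := by
  have hhg1 : A h g = 1 := by rw [hA.apply]; exact hgh1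
  set B := pivot2 A g h with hB
  have hBsymm : B.IsSymm := pivot2_symm hA g h
  have hBgh : B g h = 1 := by
    rw [hB, pivot2_apply_touch (Or.inl rfl), Equiv.swap_apply_left, Equiv.swap_apply_right]
    exact hhg1
  have hBgg : B g g = 0 := by
    rw [hB, pivot2_apply_touch (Or.inl rfl), Equiv.swap_apply_left]; exact hhh
  have hBhh : B h h = 0 := by
    rw [hB, pivot2_apply_touch (Or.inr (Or.inl rfl)), Equiv.swap_apply_right]; exact hgg
  by_cases hg : g ∈ S
  · by_cases hh : h ∈ S
    · -- both in S
      set T := (S.erase g).erase h with hT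
      have hgT : g ∉ T := fun hc => Finset.notMem_erase g S (Finset.mem_of_mem_erase hc)
      have hhT : h ∉ T := Finset.notMem_erase h _
      have hST : S = insert g (insert h T) := by
        rw [hT, Finset.insert_erase (Finset.mem_erase_of_ne_of_mem (fun hc => hne hc.symm) hh),
          Finset.insert_erase hg]
      have h2 := P2 hBsymm hne hBgh hBgg hBhh hgT hhT
      rw [← hST] at h2
      rw [symmDiff_pair_yy hne hg hh, ← hT, h2]
      have : mask T (pivot2 B g h) = mask T A := by
        apply mask_congr
        intro i hi j hj
        have hi' := Finset.mem_erase.mp hi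
        have hj' := Finset.mem_erase.mp hj
        have hi'' := Finset.mem_erase.mp hi'.2
        have hj'' := Finset.mem_erase.mp hj'.2
        exact pivot2_pivot2 hi''.1 hi'.1 hj''.1 hj'.1
      rw [this]
    · -- g ∈ S, h ∉ S
      set T := S.erase g with hT
      have hgT : g ∉ T := Finset.notMem_erase g S
      have hhT : h ∉ T := fun hc => hh (Finset.mem_of_mem_erase hc)
      have hST : S = insert g T := (Finset.insert_erase hg).symm
      rw [symmDiff_pair_yn hne hg hh, ← hT, hST]
      exact P2mixed hA hne hgh1 hgg hhh hgT hhT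
  · by_cases hh : h ∈ S
    · -- g ∉ S, h ∈ S
      set T := S.erase h with hT
      have hgT : g ∉ T := fun hc => hg (Finset.mem_of_mem_erase hc)
      have hhT : h ∉ T := Finset.notMem_erase h S
      have hST : S = insert h T := (Finset.insert_erase hh).symm
      rw [symmDiff_pair_ny hne hg hh, ← hT, hST, hB, pivot2_comm]
      exact P2mixed hA hne.symm hhg1 hhh hgg hhT hgT
    · -- both out
      rw [symmDiff_pair_nn hne hg hh]
      exact (P2 hA hne hgh1 hgg hhh hg hh).symm

lemma Phi_pivot1 {A : Matrix E E (ZMod 2)} (hA : A.IsSymm) {g : E} (hgg : A g g = 1)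
    (S : Finset E) : S ∈ Phi (pivot1 A g) ↔ S ∆ ({g} : Finset E) ∈ Phi A := by
  rw [Phi_iff, Phi_iff, P1' hA hgg]

lemma Phi_pivot2 {A : Matrix E E (ZMod 2)} (hA : A.IsSymm) {g h : E} (hne : g ≠ h)
    (hgh1 : A g h = 1) (hgg : A g g = 0) (hhh : A h h = 0) (S : Finset E) :
    S ∈ Phi (pivot2 A g h) ↔ S ∆ ({g, h} : Finset E) ∈ Phi A := by
  rw [Phi_iff, Phi_iff, P2all hA hne hgh1 hgg hhh]

lemma exists_one_in_row {A : Matrix E E (ZMod 2)} {U : Finset E} (hU : U ∈ Phi A)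
    {g : E} (hg : g ∈ U) : ∃ h ∈ U, A g h = 1 := by
  by_contra hc
  push_neg at hc
  have hrow : ∀ j, mask U A g j = 0 := by
    intro j
    rw [mask_apply]
    by_cases hj : j ∈ U
    · rw [if_pos ⟨hg, hj⟩]
      rcases zmod2_cases (A g j) with h0 | h1
      · exact h0
      · exact absurd h1 (hc j hj)
    · rw [if_neg (fun hp => hj hp.2), if_neg (fun hp : g = j => hj (hp ▸ hg))]
  rw [Phi_iff] at hU
  rw [Matrix.det_eq_zero_of_row_eq_zero g hrow] at hU
  simp at hU

lemma exchange_aux : ∀ n : ℕ, ∀ A : Matrix E E (ZMod 2), A.IsSymm →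
    ∀ U : Finset E, U.card = n → U ∈ Phi A → ∀ V ∈ Phi A, ∀ e ∈ U ∆ V,
    ∃ e' ∈ U ∆ V, U ∆ ({e, e'} : Finset E) ∈ Phi A := by
  intro n
  induction n using Nat.strong_induction_on with
  | _ n IH =>
    intro A hA U hUcard hU V hV e he
    rcases U.eq_empty_or_nonempty with rfl | ⟨g, hg⟩
    · -- base case : U = ∅
      have hUV : (∅ : Finset E) ∆ V = V := by
        rw [← Finset.bot_eq_empty, bot_symmDiff]
      have heV : e ∈ V := by rw [hUV] at he; exact he
      by_cases hee : A e e = 1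
      · refine ⟨e, he, ?_⟩
        have hp : ({e, e} : Finset E) = {e} := by simp
        rw [hp, ← Finset.bot_eq_empty, bot_symmDiff]
        exact single_mem_Phi hee
      · have hee0 : A e e = 0 := by
          rcases zmod2_cases (A e e) with h0 | h1
          · exact h0
          · exact absurd h1 hee
        obtain ⟨e', he', h1⟩ := exists_one_in_row hV heV
        have hne : e ≠ e' := fun hc => hee (hc ▸ h1)
        refine ⟨e', by rw [hUV]; exact he', ?_⟩
        rw [← Finset.bot_eq_empty, bot_symmDiff]
        exact pair_mem_Phi hne hee0 h1 (by rw [hA.apply]; exact h1)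
    · -- inductive step : U nonempty
      by_cases hdiag : ∃ x ∈ U, A x x = 1
      · obtain ⟨x, hx, hxx⟩ := hdiag
        set B := pivot1 A x with hB
        have hBsymm : B.IsSymm := pivot1_symm hA x
        have htr : ∀ S, S ∈ Phi B ↔ S ∆ ({x} : Finset E) ∈ Phi A := Phi_pivot1 hA hxx
        set U' := U ∆ ({x} : Finset E) with hU'
        set V' := V ∆ ({x} : Finset E) with hV'
        have hU'B : U' ∈ Phi B := by
          rw [htr, hU', symmDiff_symmDiff_cancel_right]; exact hU
        have hV'B : V' ∈ Phi B := by
          rw [htr, hV', symmDiff_symmDiff_cancel_right]; exact hV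
        have hUV : U' ∆ V' = U ∆ V := by
          rw [hU', hV', symmDiff_symmDiff_symmDiff_comm, symmDiff_self, symmDiff_bot]
        have hcard : U'.card < n := by
          rw [hU', symmDiff_singleton_mem hx, ← hUcard]
          exact Finset.card_erase_lt_of_mem hx
        obtain ⟨e', he', hmem⟩ := IH U'.card hcard B hBsymm U' rfl hU'B V' hV'B e
          (by rw [hUV]; exact he)
        refine ⟨e', by rw [← hUV]; exact he', ?_⟩
        rw [htr, symmDiff_right_comm, hU', symmDiff_symmDiff_cancel_right] at hmem
        exact hmem
      · -- all diagonal entries on U vanish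
        push_neg at hdiag
        have hgg : A g g = 0 := by
          rcases zmod2_cases (A g g) with h0 | h1
          · exact h0
          · exact absurd h1 (by simpa using hdiag g hg)
        obtain ⟨x, hx, hgx⟩ := exists_one_in_row hU hg
        have hne : g ≠ x := fun hc => by rw [← hc] at hgx; rw [hgx] at hgg; simp at hgg
        have hxx : A x x = 0 := by
          rcases zmod2_cases (A x x) with h0 | h1
          · exact h0
          · exact absurd h1 (by simpa using hdiag x hx)
        set B := pivot2 A g x with hB
        have hBsymm : B.IsSymm := pivot2_symm hA g x
        have htr : ∀ S, S ∈ Phi B ↔ S ∆ ({g, x} : Finset E) ∈ Phi A :=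
          Phi_pivot2 hA hne hgx hgg hxx
        set U' := U ∆ ({g, x} : Finset E) with hU'
        set V' := V ∆ ({g, x} : Finset E) with hV'
        have hU'B : U' ∈ Phi B := by
          rw [htr, hU', symmDiff_symmDiff_cancel_right]; exact hU
        have hV'B : V' ∈ Phi B := by
          rw [htr, hV', symmDiff_symmDiff_cancel_right]; exact hV
        have hUV : U' ∆ V' = U ∆ V := by
          rw [hU', hV', symmDiff_symmDiff_symmDiff_comm, symmDiff_self, symmDiff_bot]
        have hcard : U'.card < n := by
          rw [hU', symmDiff_pair_yy hne hg hx, ← hUcard]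
          exact lt_of_le_of_lt (Finset.card_erase_le)
            (Finset.card_erase_lt_of_mem hg)
        obtain ⟨e', he', hmem⟩ := IH U'.card hcard B hBsymm U' rfl hU'B V' hV'B e
          (by rw [hUV]; exact he)
        refine ⟨e', by rw [← hUV]; exact he', ?_⟩
        rw [htr, symmDiff_right_comm, hU', symmDiff_symmDiff_cancel_right] at hmem
        exact hmem

end Aux

/-- The twist of the nondegeneracy set system of a symmetric matrix over `𝔽₂`
by any subset is a delta-matroid: proper and satisfying the symmetric exchange axiom. -/
theorem stmt1 (A : Matrix E E (ZMod 2)) (hA : A.IsSymm) (E' : Finset E) :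
    ((· ∆ E') '' Phi A).Nonempty ∧ SEAxiom ((· ∆ E') '' Phi A) := by
  constructor
  · exact ⟨E', ∅, empty_mem_Phi A, by show (∅ : Finset E) ∆ E' = E'; rw [← Finset.bot_eq_empty, bot_symmDiff]⟩
  · intro φ₁ h₁ φ₂ h₂ e he
    obtain ⟨U, hU, rfl⟩ := h₁
    obtain ⟨V, hV, rfl⟩ := h₂
    have hsets : (U ∆ E') ∆ (V ∆ E') = U ∆ V := by
      rw [symmDiff_symmDiff_symmDiff_comm, symmDiff_self, symmDiff_bot]
    rw [hsets] at he
    obtain ⟨e', he', hmem⟩ := exchange_aux U.card A hA U rfl hU V hV e he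
    exact ⟨e', by rw [hsets]; exact he',
      ⟨U ∆ ({e, e'} : Finset E), hmem, (symmDiff_right_comm U E' {e, e'}).symm⟩⟩
end

section
/- Let E be a finite set. The mapping ν_E is injective on Lagrangian subspaces: if L₁, L₂ ⊆ V_E are Lagrangian subspaces with ν_E(L₁) = ν_E(L₂) (i.e. the two set systems have the same feasible subsets), then L₁ = L₂. -/
open Finset
open scoped symmDiff

variable {E : Type*} [Fintype E] [DecidableEq E]

/-- Explicit description of `coordSpan` as a set of pairs with support conditions. -/
def coordSet (Y : Finset E) : Submodule (ZMod 2) (V E) where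
  carrier := {u | (∀ e ∈ Y, u.1 e = 0) ∧ ∀ e ∉ Y, u.2 e = 0}
  add_mem' := by
    rintro a b ⟨ha1, ha2⟩ ⟨hb1, hb2⟩
    exact ⟨fun e he => by simp [Prod.fst_add, ha1 e he, hb1 e he],
      fun e he => by simp [Prod.snd_add, ha2 e he, hb2 e he]⟩
  zero_mem' := ⟨fun e _ => rfl, fun e _ => rfl⟩
  smul_mem' := by
    rintro c a ⟨ha1, ha2⟩
    exact ⟨fun e he => by simp [ha1 e he], fun e he => by simp [ha2 e he]⟩

lemma mem_coordSet {Y : Finset E} {u : V E} :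
    u ∈ coordSet Y ↔ (∀ e ∈ Y, u.1 e = 0) ∧ ∀ e ∉ Y, u.2 e = 0 := Iff.rfl

lemma decomp (u : V E) : u = ∑ e, (u.1 e • baseV e + u.2 e • dualV e) := by
  have h1 : ∀ (x : E → ZMod 2) (f : E), (∑ e, x e • Pi.single e (1 : ZMod 2)) f = x f := by
    intro x f
    rw [Finset.sum_apply]
    rw [Finset.sum_eq_single f]
    · simp
    · intro b _ hb; simp [Pi.single_apply, hb]
    · simp
  apply Prod.ext
  · funext f
    rw [Prod.fst_sum]
    have : ∀ e : E, (u.1 e • baseV e + u.2 e • dualV e).1 = u.1 e • Pi.single e (1 : ZMod 2) := by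
      intro e; simp [baseV, dualV]
    rw [Finset.sum_congr rfl fun e _ => this e]
    exact (h1 u.1 f).symm
  · funext f
    rw [Prod.snd_sum]
    have : ∀ e : E, (u.1 e • baseV e + u.2 e • dualV e).2 = u.2 e • Pi.single e (1 : ZMod 2) := by
      intro e; simp [baseV, dualV]
    rw [Finset.sum_congr rfl fun e _ => this e]
    exact (h1 u.2 f).symm

lemma coordSpan_eq (Y : Finset E) : coordSpan Y = coordSet Y := by
  apply le_antisymm
  · rw [coordSpan, Submodule.span_le]
    rintro u (⟨e, he, rfl⟩ | ⟨e, he, rfl⟩)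
    · refine ⟨fun f _ => rfl, fun f hf => ?_⟩
      simp only [Finset.mem_coe] at he
      simp [dualV, Pi.single_apply]
      intro hfe; exact absurd (hfe ▸ he) hf
    · simp only [Finset.mem_coe, Finset.mem_compl] at he
      refine ⟨fun f hf => ?_, fun f _ => rfl⟩
      simp [baseV, Pi.single_apply]
      intro hfe; exact absurd (hfe ▸ hf) he
  · intro u hu
    rw [mem_coordSet] at hu
    rw [decomp u]
    apply Submodule.sum_mem
    intro e _
    apply Submodule.add_mem
    · by_cases he : e ∈ Y
      · rw [hu.1 e he]; simp
      · exact Submodule.smul_mem _ _ (Submodule.subset_span (Or.inr ⟨e, by simpa using he, rfl⟩))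
    · by_cases he : e ∈ Y
      · exact Submodule.smul_mem _ _ (Submodule.subset_span (Or.inl ⟨e, by simpa using he, rfl⟩))
      · rw [hu.2 e he]; simp
set_option linter.unusedSectionVars false

/-- The linear map whose range is `graphOf A`. -/
def gmap (A : Matrix E E (ZMod 2)) : (E → ZMod 2) →ₗ[ZMod 2] V E where
  toFun c := (fun f => ∑ g, c g * A g f, c)
  map_add' u v := by
    ext f
    · simp [add_mul, Finset.sum_add_distrib]
    · rfl
  map_smul' t u := by
    ext f
    · simp [Finset.mul_sum, mul_assoc]
    · rfl

lemma gmap_single (A : Matrix E E (ZMod 2)) (e : E) :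
    gmap A (Pi.single e 1) = rowVec A e := by
  apply Prod.ext
  · show (fun f => ∑ g, (Pi.single e 1 : E → ZMod 2) g * A g f) = A e
    funext f
    rw [Finset.sum_eq_single e]
    · simp
    · intro b _ hb; simp [Pi.single_apply, hb]
    · simp
  · rfl

lemma gmap_eq_sum (A : Matrix E E (ZMod 2)) (c : E → ZMod 2) :
    gmap A c = ∑ e, c e • rowVec A e := by
  have : c = ∑ e, c e • Pi.single e (1 : ZMod 2) := by
    funext f
    rw [Finset.sum_apply, Finset.sum_eq_single f]
    · simp
    · intro b _ hb; simp [Pi.single_apply, hb]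
    · simp
  calc gmap A c = gmap A (∑ e, c e • Pi.single e (1:ZMod 2)) := by rw [← this]
    _ = ∑ e, c e • gmap A (Pi.single e 1) := by rw [map_sum]; simp
    _ = ∑ e, c e • rowVec A e := by simp [gmap_single]

lemma graphOf_eq_range (A : Matrix E E (ZMod 2)) :
    graphOf A = LinearMap.range (gmap A) := by
  apply le_antisymm
  · rw [graphOf, Submodule.span_le]
    rintro u ⟨e, rfl⟩
    exact ⟨Pi.single e 1, gmap_single A e⟩
  · rintro u ⟨c, rfl⟩
    rw [gmap_eq_sum]
    exact Submodule.sum_mem _ fun e _ =>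
      Submodule.smul_mem _ _ (Submodule.subset_span ⟨e, rfl⟩)

/-- Kernel-triviality of the principal submatrix of `A` on `U`. -/
def KT (A : Matrix E E (ZMod 2)) (U : Finset E) : Prop :=
  ∀ c : E → ZMod 2, (∀ g, g ∉ U → c g = 0) → (∀ f ∈ U, ∑ g, c g * A g f = 0) → c = 0

lemma feasible_graphOf_iff (A : Matrix E E (ZMod 2)) (U : Finset E) :
    Feasible (graphOf A) U ↔ KT A U := by
  rw [Feasible, coordSpan_eq, graphOf_eq_range, Submodule.eq_bot_iff]
  constructor
  · intro H c hsupp heq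
    have h0 : gmap A c = 0 := by
      apply H
      exact Submodule.mem_inf.mpr ⟨⟨c, rfl⟩,
        ⟨fun f hf => heq f hf, fun g hg => hsupp g hg⟩⟩
    have := congrArg Prod.snd h0
    simpa [gmap] using this
  · intro H u hu
    obtain ⟨⟨c, rfl⟩, hc⟩ := Submodule.mem_inf.mp hu
    rw [mem_coordSet] at hc
    have : c = 0 := H c (fun g hg => hc.2 g hg) (fun f hf => hc.1 f hf)
    rw [this, map_zero]
lemma sigma_sigma (Y : Finset E) (u : V E) : sigmaSet Y (sigmaSet Y u) = u := by
  apply Prod.ext <;> funext f <;> simp [sigmaSet] <;> split <;> rfl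

/-- `sigmaSet` as a linear equivalence. -/
def sigmaEquiv (Y : Finset E) : V E ≃ₗ[ZMod 2] V E :=
  LinearEquiv.ofLinear (sigmaSet Y) (sigmaSet Y)
    (LinearMap.ext fun u => sigma_sigma Y u) (LinearMap.ext fun u => sigma_sigma Y u)

lemma sigma_injective (Y : Finset E) : Function.Injective (sigmaSet Y) :=
  (sigmaEquiv Y).injective

lemma omega_sigma (Y : Finset E) (u v : V E) :
    omegaForm (sigmaSet Y u) (sigmaSet Y v) = omegaForm u v := by
  unfold omegaForm sigmaSet
  apply Finset.sum_congr rfl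
  intro f _
  dsimp
  split <;> ring

lemma map_coordSet (Y U : Finset E) :
    Submodule.map (sigmaSet Y) (coordSet U) = coordSet (U ∆ Y) := by
  have key : ∀ W : Finset E, ∀ u ∈ coordSet W, sigmaSet Y u ∈ coordSet (W ∆ Y) := by
    intro W u hu
    rw [mem_coordSet] at hu ⊢
    constructor
    · intro e he
      rw [Finset.mem_symmDiff] at he
      show (if e ∈ Y then u.2 e else u.1 e) = 0
      rcases he with ⟨heW, heY⟩ | ⟨heY, heW⟩
      · rw [if_neg heY]; exact hu.1 e heW
      · rw [if_pos heY]; exact hu.2 e heW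
    · intro e he
      rw [Finset.mem_symmDiff] at he
      push_neg at he
      show (if e ∈ Y then u.1 e else u.2 e) = 0
      by_cases heY : e ∈ Y
      · rw [if_pos heY]; exact hu.1 e (he.2 heY)
      · rw [if_neg heY]
        exact hu.2 e (fun heW => heY (he.1 heW))
  apply le_antisymm
  · rintro u ⟨w, hw, rfl⟩
    exact key U w hw
  · intro u hu
    refine ⟨sigmaSet Y u, ?_, sigma_sigma Y u⟩
    have := key (U ∆ Y) u hu
    rwa [symmDiff_symmDiff_cancel_right] at this

lemma map_coordSpan (Y U : Finset E) :
    Submodule.map (sigmaSet Y) (coordSpan U) = coordSpan (U ∆ Y) := by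
  rw [coordSpan_eq, coordSpan_eq, map_coordSet]

lemma map_sigma_eq_bot_iff (Y : Finset E) (p : Submodule (ZMod 2) (V E)) :
    Submodule.map (sigmaSet Y) p = ⊥ ↔ p = ⊥ := by
  constructor
  · intro hp
    rw [Submodule.eq_bot_iff] at hp ⊢
    intro x hx
    have : sigmaSet Y x = 0 := hp _ ⟨x, hx, rfl⟩
    have := congrArg (sigmaSet Y) this
    rwa [sigma_sigma, map_zero] at this
  · rintro rfl; exact Submodule.map_bot _

lemma feasible_map_iff (Y U : Finset E) (L : Submodule (ZMod 2) (V E)) :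
    Feasible (Submodule.map (sigmaSet Y) L) (U ∆ Y) ↔ Feasible L U := by
  rw [Feasible, Feasible, ← map_coordSpan,
    ← Submodule.map_inf _ (sigma_injective Y), map_sigma_eq_bot_iff]

lemma isLagrangian_map (Y : Finset E) (L : Submodule (ZMod 2) (V E))
    (hL : IsLagrangian L) : IsLagrangian (Submodule.map (sigmaSet Y) L) := by
  constructor
  · rintro u ⟨a, ha, rfl⟩ v ⟨b, hb, rfl⟩
    rw [omega_sigma]
    exact hL.1 a ha b hb
  · rw [show (sigmaSet Y : V E →ₗ[ZMod 2] V E) = (sigmaEquiv Y : V E →ₗ[ZMod 2] V E) from rfl,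
      LinearEquiv.finrank_map_eq]
    exact hL.2
lemma zmod2_ne_zero {a : ZMod 2} (h : a ≠ 0) : a = 1 := by revert h; revert a; decide

lemma exists_feasible (L : Submodule (ZMod 2) (V E)) (hL : IsLagrangian L) :
    ∃ Y : Finset E, Feasible L Y := by
  obtain ⟨Y, -, hmin⟩ := Finset.exists_min_image (Finset.univ : Finset (Finset E))
    (fun Y => Module.finrank (ZMod 2) ↥(L ⊓ coordSpan Y)) ⟨∅, Finset.mem_univ _⟩
  refine ⟨Y, ?_⟩
  by_contra hne
  obtain ⟨v, hvL, hv0⟩ := Submodule.ne_bot_iff _ |>.mp hne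
  obtain ⟨hvL', hvC⟩ := Submodule.mem_inf.mp hvL
  rw [coordSpan_eq, mem_coordSet] at hvC
  -- some coordinate of v is nonzero
  have hex : (∃ e ∉ Y, v.1 e ≠ 0) ∨ (∃ e ∈ Y, v.2 e ≠ 0) := by
    by_contra hno
    push_neg at hno
    apply hv0
    apply Prod.ext <;> funext f
    · by_cases hf : f ∈ Y
      · exact hvC.1 f hf
      · exact hno.1 f hf
    · by_cases hf : f ∈ Y
      · exact hno.2 f hf
      · exact hvC.2 f hf
  -- in either case we produce Y' with strictly smaller intersection
  have key : ∃ Y' : Finset E,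
      L ⊓ coordSpan Y' < L ⊓ coordSpan Y := by
    rcases hex with ⟨e, heY, hve⟩ | ⟨e, heY, hve⟩
    · refine ⟨insert e Y, lt_of_le_of_ne ?_ ?_⟩
      · intro w hw
        obtain ⟨hwL, hwC⟩ := Submodule.mem_inf.mp hw
        rw [coordSpan_eq, mem_coordSet] at hwC
        -- use isotropy to show w.2 e = 0
        have homega : omegaForm v w = 0 := hL.1 v hvL' w hwL
        have hsum : omegaForm v w = v.1 e * w.2 e := by
          rw [omegaForm, Finset.sum_eq_single e]
          · rw [hwC.1 e (Finset.mem_insert_self e Y), mul_zero, add_zero]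
          · intro f _ hf
            by_cases hfY : f ∈ Y
            · rw [hvC.1 f hfY, hwC.1 f (Finset.mem_insert_of_mem hfY), zero_mul,
                mul_zero, add_zero]
            · rw [hvC.2 f hfY, hwC.2 f (by simp [Finset.mem_insert, hf, hfY]), mul_zero,
                zero_mul, add_zero]
          · simp
        have hw2e : w.2 e = 0 := by
          rw [homega] at hsum
          rcases zmod2_ne_zero hve with hv1
          rw [hv1, one_mul] at hsum
          exact hsum.symm
        refine Submodule.mem_inf.mpr ⟨hwL, ?_⟩
        rw [coordSpan_eq, mem_coordSet]
        refine ⟨fun f hf => hwC.1 f (Finset.mem_insert_of_mem hf), fun f hf => ?_⟩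
        by_cases hfe : f = e
        · rw [hfe]; exact hw2e
        · exact hwC.2 f (by simp [Finset.mem_insert, hfe, hf])
      · intro heq
        have hvmem : v ∈ L ⊓ coordSpan (insert e Y) := heq ▸ hvL
        obtain ⟨-, hvC'⟩ := Submodule.mem_inf.mp hvmem
        rw [coordSpan_eq, mem_coordSet] at hvC'
        exact hve (hvC'.1 e (Finset.mem_insert_self e Y))
    · refine ⟨Y.erase e, lt_of_le_of_ne ?_ ?_⟩
      · intro w hw
        obtain ⟨hwL, hwC⟩ := Submodule.mem_inf.mp hw
        rw [coordSpan_eq, mem_coordSet] at hwC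
        have homega : omegaForm v w = 0 := hL.1 v hvL' w hwL
        have hsum : omegaForm v w = v.2 e * w.1 e := by
          rw [omegaForm, Finset.sum_eq_single e]
          · rw [hvC.1 e heY, zero_mul, zero_add]
          · intro f _ hf
            by_cases hfY : f ∈ Y
            · rw [hvC.1 f hfY, hwC.1 f (Finset.mem_erase.mpr ⟨hf, hfY⟩), zero_mul,
                mul_zero, add_zero]
            · rw [hvC.2 f hfY, hwC.2 f (by simp [Finset.mem_erase, hfY]), mul_zero,
                zero_mul, add_zero]
          · simp
        have hw1e : w.1 e = 0 := by
          rw [homega] at hsum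
          rcases zmod2_ne_zero hve with hv1
          rw [hv1, one_mul] at hsum
          exact hsum.symm
        refine Submodule.mem_inf.mpr ⟨hwL, ?_⟩
        rw [coordSpan_eq, mem_coordSet]
        constructor
        · intro f hf
          by_cases hfe : f = e
          · rw [hfe]; exact hw1e
          · exact hwC.1 f (Finset.mem_erase.mpr ⟨hfe, hf⟩)
        · intro f hf
          exact hwC.2 f (fun hmem => hf (Finset.mem_of_mem_erase hmem))
      · intro heq
        have hvmem : v ∈ L ⊓ coordSpan (Y.erase e) := heq ▸ hvL
        obtain ⟨-, hvC'⟩ := Submodule.mem_inf.mp hvmem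
        rw [coordSpan_eq, mem_coordSet] at hvC'
        exact hve (hvC'.2 e (fun hmem => (Finset.mem_erase.mp hmem).1 rfl))
  obtain ⟨Y', hlt⟩ := key
  have := hmin Y' (Finset.mem_univ _)
  exact absurd (Submodule.finrank_lt_finrank_of_lt hlt) (by omega)
lemma graph_rep (L : Submodule (ZMod 2) (V E)) (hL : IsLagrangian L)
    (hfe : Feasible L ∅) :
    ∃ A : Matrix E E (ZMod 2), (∀ e f, A e f = A f e) ∧ L = graphOf A := by
  have hbot : ∀ u ∈ L, u.2 = 0 → u = 0 := by
    intro u huL hu2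
    have : u ∈ L ⊓ coordSpan ∅ := by
      refine Submodule.mem_inf.mpr ⟨huL, ?_⟩
      rw [coordSpan_eq, mem_coordSet]
      exact ⟨fun e he => absurd he (Finset.notMem_empty e), fun e _ => by rw [hu2]; rfl⟩
    rwa [hfe, Submodule.mem_bot] at this
  -- the projection to the second component is surjective
  let π : L →ₗ[ZMod 2] (E → ZMod 2) :=
    (LinearMap.snd (ZMod 2) (E → ZMod 2) (E → ZMod 2)).comp L.subtype
  have hinj : Function.Injective π := by
    intro a b hab
    apply Subtype.ext
    have h2 : ((a : V E) - (b : V E)).2 = 0 := by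
      have : (a : V E).2 = (b : V E).2 := hab
      simp [Prod.snd_sub, this]
    have := hbot _ (Submodule.sub_mem L a.2 b.2) h2
    exact sub_eq_zero.mp this
  have hdim : Module.finrank (ZMod 2) L = Module.finrank (ZMod 2) (E → ZMod 2) := by
    rw [hL.2, Module.finrank_fintype_fun_eq_card]
  have hsurj : Function.Surjective π :=
    (LinearMap.injective_iff_surjective_of_finrank_eq_finrank hdim).mp hinj
  -- choose preimages of the standard basis vectors
  choose w hw using fun e : E => hsurj (Pi.single e 1)
  set A : Matrix E E (ZMod 2) := fun e => (w e : V E).1 with hA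
  have hrow : ∀ e, rowVec A e = (w e : V E) := by
    intro e
    apply Prod.ext
    · rfl
    · exact (hw e).symm
  have hrowL : ∀ e, rowVec A e ∈ L := fun e => (hrow e) ▸ (w e).2
  have hLG : L = graphOf A := by
    apply le_antisymm
    · intro u huL
      have hG : gmap A u.2 ∈ L := by
        rw [gmap_eq_sum]
        exact Submodule.sum_mem _ fun e _ => Submodule.smul_mem _ _ (hrowL e)
      have hsub : u - gmap A u.2 ∈ L := Submodule.sub_mem _ huL hG
      have h2 : (u - gmap A u.2).2 = 0 := by
        show u.2 - (gmap A u.2).2 = 0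
        have : (gmap A u.2).2 = u.2 := rfl
        rw [this, sub_self]
      have := hbot _ hsub h2
      have hu : u = gmap A u.2 := by
        have := sub_eq_zero.mp this
        exact this
      rw [hu, graphOf_eq_range]
      exact ⟨u.2, rfl⟩
    · rw [graphOf, Submodule.span_le]
      rintro x ⟨e, rfl⟩
      exact hrowL e
  refine ⟨A, ?_, hLG⟩
  intro e f
  have homega : omegaForm (rowVec A e) (rowVec A f) = 0 :=
    hL.1 _ (hrowL e) _ (hrowL f)
  have hcalc : omegaForm (rowVec A e) (rowVec A f) = A e f + A f e := by
    rw [omegaForm]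
    have he : ∀ g, (rowVec A e).1 g * (rowVec A f).2 g = if g = f then A e f else 0 := by
      intro g
      simp only [rowVec]
      by_cases hg : g = f
      · subst hg; simp
      · simp [Pi.single_apply, hg]
    have he' : ∀ g, (rowVec A e).2 g * (rowVec A f).1 g = if g = e then A f e else 0 := by
      intro g
      simp only [rowVec]
      by_cases hg : g = e
      · subst hg; simp
      · simp [Pi.single_apply, hg]
    rw [Finset.sum_congr rfl (fun g _ => by rw [he g, he' g])]
    rw [Finset.sum_add_distrib, Finset.sum_ite_eq' Finset.univ f, Finset.sum_ite_eq' Finset.univ e]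
    simp
  rw [homega] at hcalc
  have h2 : A e f + A f e = 0 := hcalc.symm
  have := congrArg (· + A f e) h2
  simpa [add_assoc, CharTwo.add_self_eq_zero] using this
lemma zmod2_not_one {a : ZMod 2} (h : ¬ a = 1) : a = 0 := by revert h; revert a; decide

lemma zmod2_iff_one {a b : ZMod 2} (h : a = 1 ↔ b = 1) : a = b := by
  revert h; revert a b; decide

lemma sum_pair_support (A' : Matrix E E (ZMod 2)) {e f : E} (hef : e ≠ f) (c : E → ZMod 2)
    (hsupp : ∀ g, g ∉ ({e, f} : Finset E) → c g = 0) (x : E) :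
    ∑ g, c g * A' g x = c e * A' e x + c f * A' f x := by
  rw [← Finset.sum_subset (Finset.subset_univ ({e, f} : Finset E))
    (fun g _ hg => by rw [hsupp g hg, zero_mul])]
  rw [Finset.sum_pair hef]

lemma KT_singleton (A : Matrix E E (ZMod 2)) (e : E) : KT A {e} ↔ A e e = 1 := by
  constructor
  · intro H
    by_contra hne
    have h0 : A e e = 0 := zmod2_not_one hne
    have := H (Pi.single e 1)
      (fun g hg => by
        rw [Pi.single_apply, if_neg]
        intro hge; exact hg (by simp [hge]))
      (fun x hx => by
        rw [Finset.mem_singleton] at hx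
        rw [hx]
        rw [Finset.sum_eq_single e]
        · simp [h0]
        · intro b _ hb; simp [Pi.single_apply, hb]
        · simp)
    have := congrFun this e
    simp at this
  · intro h1 c hsupp heq
    have hsum := heq e (Finset.mem_singleton_self e)
    rw [Finset.sum_eq_single e] at hsum
    · funext g
      by_cases hg : g = e
      · subst hg; rwa [h1, mul_one] at hsum
      · exact hsupp g (by simp [hg])
    · intro b _ hb
      rw [hsupp b (by simp [hb]), zero_mul]
    · simp

lemma KT_pair (A : Matrix E E (ZMod 2)) {e f : E} (hef : e ≠ f) :
    KT A {e, f} ↔ ∀ s t : ZMod 2,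
      s * A e e + t * A f e = 0 → s * A e f + t * A f f = 0 → s = 0 ∧ t = 0 := by
  constructor
  · intro H s t h1 h2
    set c : E → ZMod 2 := fun g => if g = e then s else if g = f then t else 0 with hc
    have hce : c e = s := by simp [hc]
    have hcf : c f = t := by simp [hc, hef.symm]
    have hsupp : ∀ g, g ∉ ({e, f} : Finset E) → c g = 0 := by
      intro g hg
      simp only [Finset.mem_insert, Finset.mem_singleton, not_or] at hg
      simp [hc, hg.1, hg.2]
    have h0 : c = 0 := by
      apply H c hsupp
      intro x hx
      rw [sum_pair_support A hef c hsupp x, hce, hcf]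
      rcases Finset.mem_insert.mp hx with rfl | hx
      · exact h1
      · rw [Finset.mem_singleton] at hx; subst hx; exact h2
    constructor
    · rw [← hce, h0]; rfl
    · rw [← hcf, h0]; rfl
  · intro H c hsupp heq
    have h1 := heq e (by simp)
    have h2 := heq f (by simp)
    rw [sum_pair_support A hef c hsupp] at h1 h2
    obtain ⟨hs, ht⟩ := H (c e) (c f) h1 h2
    funext g
    by_cases hg : g = e
    · subst hg; exact hs
    · by_cases hg' : g = f
      · subst hg'; exact ht
      · exact hsupp g (by simp [hg, hg'])

lemma pair_numeric : ∀ a d x y : ZMod 2,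
    ((∀ s t : ZMod 2, s * a + t * x = 0 → s * x + t * d = 0 → s = 0 ∧ t = 0) ↔
      (∀ s t : ZMod 2, s * a + t * y = 0 → s * y + t * d = 0 → s = 0 ∧ t = 0)) → x = y := by
  decide

lemma KT_determines (A B : Matrix E E (ZMod 2))
    (hA : ∀ e f, A e f = A f e) (hB : ∀ e f, B e f = B f e)
    (h : ∀ U : Finset E, KT A U ↔ KT B U) : A = B := by
  have hdiag : ∀ e, A e e = B e e := by
    intro e
    exact zmod2_iff_one ((KT_singleton A e).symm.trans ((h {e}).trans (KT_singleton B e)))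
  funext e f
  by_cases hef : e = f
  · subst hef; exact hdiag e
  · have hpair := (KT_pair A hef).symm.trans ((h {e, f}).trans (KT_pair B hef))
    rw [hA f e, hB f e, hdiag e, hdiag f] at hpair
    exact pair_numeric (B e e) (B f f) (A e f) (B e f) hpair
/-- `ν_E` is injective on Lagrangian subspaces. -/
theorem stmt3 (L₁ L₂ : Submodule (ZMod 2) (V E))
    (h₁ : IsLagrangian L₁) (h₂ : IsLagrangian L₂) (h : nu L₁ = nu L₂) :
    L₁ = L₂ := by
  have hfe : ∀ U : Finset E, Feasible L₁ U ↔ Feasible L₂ U := by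
    intro U
    have := Set.ext_iff.mp h U
    exact this
  obtain ⟨Y, hY⟩ := exists_feasible L₁ h₁
  have hY₂ : Feasible L₂ Y := (hfe Y).mp hY
  set L₁' := Submodule.map (sigmaSet Y) L₁ with hL₁'
  set L₂' := Submodule.map (sigmaSet Y) L₂ with hL₂'
  have h₁' : IsLagrangian L₁' := isLagrangian_map Y L₁ h₁
  have h₂' : IsLagrangian L₂' := isLagrangian_map Y L₂ h₂
  have hfe1 : Feasible L₁' ∅ := by
    have := (feasible_map_iff Y Y L₁).mpr hY
    rwa [symmDiff_self, Finset.bot_eq_empty] at this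
  have hfe2 : Feasible L₂' ∅ := by
    have := (feasible_map_iff Y Y L₂).mpr hY₂
    rwa [symmDiff_self, Finset.bot_eq_empty] at this
  obtain ⟨A₁, hsA₁, hLA₁⟩ := graph_rep L₁' h₁' hfe1
  obtain ⟨A₂, hsA₂, hLA₂⟩ := graph_rep L₂' h₂' hfe2
  have hKT : ∀ U : Finset E, KT A₁ U ↔ KT A₂ U := by
    intro U
    rw [← feasible_graphOf_iff, ← feasible_graphOf_iff, ← hLA₁, ← hLA₂]
    have hU : U = (U ∆ Y) ∆ Y := (symmDiff_symmDiff_cancel_right (a := Y) (b := U)).symm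
    rw [hU, hL₁', hL₂', feasible_map_iff, feasible_map_iff]
    exact hfe _
  have hA : A₁ = A₂ := KT_determines A₁ A₂ hsA₁ hsA₂ hKT
  have hL' : L₁' = L₂' := by rw [hLA₁, hLA₂, hA]
  have hinv : ∀ L : Submodule (ZMod 2) (V E),
      Submodule.map (sigmaSet Y) (Submodule.map (sigmaSet Y) L) = L := by
    intro L
    rw [← Submodule.map_comp]
    have : (sigmaSet Y).comp (sigmaSet Y) = LinearMap.id :=
      LinearMap.ext fun u => sigma_sigma Y u
    rw [this, Submodule.map_id]
  calc L₁ = Submodule.map (sigmaSet Y) L₁' := (hinv L₁).symm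
    _ = Submodule.map (sigmaSet Y) L₂' := by rw [hL']
    _ = L₂ := hinv L₂
end
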